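/- Let G be cyclic of prime order p ≥ 3. Then the omega invariant of ℬ_±(G) satisfies ω(ℬ_±(G)) ≤ p: if U, V₁,…,V_ℓ are atoms of ℬ_±(G) and U divides V₁⋯V_ℓ in ℬ_±(G), then there is a subset I ⊆ [1,ℓ] with |I| ≤ p such that U divides ∏_{i∈I} Vᵢ in ℬ_±(G). -/

import Mathlib

def IsWZS {G : Type*} [AddCommGroup G] (Γ : Set (G →+ G)) (S : Multiset G) : Prop :=
  ∃ T : Multiset (G × (G →+ G)),
    (∀ p ∈ T, p.2 ∈ Γ) ∧ T.map Prod.fst = S ∧ (T.map fun p => p.2 p.1).sum = 0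

def sigmaSet {G : Type*} [AddCommGroup G] (Γ : Set (G →+ G)) (S : Multiset G) : Set G :=
  {x | ∃ T : Multiset (G × (G →+ G)),
    (∀ p ∈ T, p.2 ∈ Γ) ∧ T.map Prod.fst = S ∧ (T.map fun p => p.2 p.1).sum = x}

def pmWeights (G : Type*) [AddCommGroup G] : Set (G →+ G) :=
  {AddMonoidHom.id G, -(AddMonoidHom.id G)}

def autWeights (G : Type*) [AddCommGroup G] : Set (G →+ G) :=
  {f : G →+ G | Function.Bijective ⇑f}

def IsAtomPM {G : Type*} [AddCommGroup G] (S : Multiset G) : Prop :=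
  S ≠ 0 ∧ IsWZS (pmWeights G) S ∧
    ∀ A B : Multiset G, IsWZS (pmWeights G) A → IsWZS (pmWeights G) B →
      A + B = S → A = 0 ∨ B = 0

def LSet {G : Type*} [AddCommGroup G] (B : Multiset G) : Set ℕ :=
  {ℓ | ∃ l : List (Multiset G), (∀ A ∈ l, IsAtomPM A) ∧ l.sum = B ∧ l.length = ℓ}

def BOver {G : Type*} [AddCommGroup G] (Γ : Set (G →+ G)) (G₀ : Set G) : Set (Multiset G) :=
  {S | (∀ g ∈ S, g ∈ G₀) ∧ IsWZS Γ S}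

def IsBasisTuple {G : Type*} [AddCommGroup G] {r : ℕ} (e : Fin r → G) : Prop :=
  (∀ i, e i ≠ 0) ∧
  (∀ m : Fin r → ℤ, (∑ i, m i • e i) = 0 → ∀ i, m i • e i = 0) ∧
  AddSubgroup.closure (Set.range e) = ⊤


lemma isWZS_iff {G : Type*} [AddCommGroup G] (S : Multiset G) :
    IsWZS (pmWeights G) S ↔ ∃ A ≤ S, A.sum + A.sum = S.sum := by
  classical
  constructor
  · rintro ⟨T, hw, hfst, hsum⟩
    set P : G × (G →+ G) → Prop := fun q => q.2 = AddMonoidHom.id G with hP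
    refine ⟨(T.filter P).map Prod.fst, ?_, ?_⟩
    · rw [← hfst]; exact Multiset.map_le_map (Multiset.filter_le _ _)
    · have hsplit : T.filter P + T.filter (fun q => ¬ P q) = T := Multiset.filter_add_not P T
      have h1 : ((T.filter P).map fun q => q.2 q.1).sum = ((T.filter P).map Prod.fst).sum := by
        congr 1
        apply Multiset.map_congr rfl
        intro q hq
        have : P q := Multiset.of_mem_filter hq
        rw [this]; rfl
      have h2 : ((T.filter fun q => ¬ P q).map fun q => q.2 q.1).sum
          = - ((T.filter fun q => ¬ P q).map Prod.fst).sum := by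
        have hng := Multiset.sum_map_neg' ((T.filter fun q => ¬ P q).map Prod.fst)
        rw [← hng, Multiset.map_map]
        congr 1
        apply Multiset.map_congr rfl
        intro q hq
        have hq1 : q ∈ T := Multiset.mem_of_mem_filter hq
        have hq2 : ¬ P q := (Multiset.mem_filter.mp hq).2
        rcases hw q hq1 with h | h
        · exact absurd h hq2
        · rw [h]; rfl
      have hS : S.sum = ((T.filter P).map Prod.fst).sum
          + ((T.filter fun q => ¬ P q).map Prod.fst).sum := by
        rw [← hfst]
        conv_lhs => rw [← hsplit]
        rw [Multiset.map_add, Multiset.sum_add]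
      have h0 : ((T.filter P).map Prod.fst).sum
          - ((T.filter fun q => ¬ P q).map Prod.fst).sum = 0 := by
        rw [← h1, sub_eq_add_neg, ← h2, ← Multiset.sum_add, ← Multiset.map_add, hsplit, hsum]
      rw [hS, ← sub_eq_zero.mp h0]
  · rintro ⟨A, hA, h2⟩
    have hAS : A + (S - A) = S := by rw [add_comm]; exact tsub_add_cancel_of_le hA
    refine ⟨A.map (fun g => (g, AddMonoidHom.id G))
      + (S - A).map (fun g => (g, -AddMonoidHom.id G)), ?_, ?_, ?_⟩
    · intro q hq
      rw [Multiset.mem_add] at hq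
      rcases hq with hq | hq <;> obtain ⟨g, -, rfl⟩ := Multiset.mem_map.mp hq
      · left; rfl
      · right; rfl
    · rw [Multiset.map_add, Multiset.map_map, Multiset.map_map]
      simp only [Function.comp]
      rw [Multiset.map_id', Multiset.map_id', hAS]
    · rw [Multiset.map_add, Multiset.map_map, Multiset.map_map, Multiset.sum_add]
      simp only [Function.comp]
      have hBsum : A.sum + (S - A).sum = S.sum := by
        rw [← Multiset.sum_add, hAS]
      have hmap : ((S - A).map fun g => (-AddMonoidHom.id G) g).sum = - (S - A).sum := by
        have hng := Multiset.sum_map_neg' (S - A)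
        rw [← hng]
        congr 1
      have hid : (A.map fun g => (AddMonoidHom.id G) g).sum = A.sum := by
        have : (A.map fun g => (AddMonoidHom.id G) g) = A.map id :=
          Multiset.map_congr rfl (fun g _ => rfl)
        rw [this, Multiset.map_id]
      rw [hid, hmap]
      have : (S - A).sum = A.sum := by
        exact add_left_cancel (hBsum.trans h2.symm)
      rw [this, add_neg_cancel]

lemma wzs_zero {G : Type*} [AddCommGroup G] : IsWZS (pmWeights G) (0 : Multiset G) :=
  (isWZS_iff 0).mpr ⟨0, le_refl _, by simp⟩

lemma wzs_singleton_zero {G : Type*} [AddCommGroup G] : IsWZS (pmWeights G) ({0} : Multiset G) :=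
  (isWZS_iff _).mpr ⟨0, by simp, by simp⟩

lemma wzs_erase_zero {G : Type*} [AddCommGroup G] [DecidableEq G] (S : Multiset G)
    (hS : IsWZS (pmWeights G) S) (h0 : (0:G) ∈ S) : IsWZS (pmWeights G) (S.erase 0) := by
  rw [isWZS_iff] at hS ⊢
  obtain ⟨A, hA, hsum⟩ := hS
  have hSsum : (S.erase 0).sum = S.sum := by
    conv_rhs => rw [← Multiset.cons_erase h0]
    rw [Multiset.sum_cons, zero_add]
  by_cases hmem : (0:G) ∈ A
  · refine ⟨A.erase 0, Multiset.erase_le_erase 0 hA, ?_⟩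
    have : (A.erase 0).sum = A.sum := by
      conv_rhs => rw [← Multiset.cons_erase hmem]
      rw [Multiset.sum_cons, zero_add]
    rw [this, hsum, hSsum]
  · refine ⟨A, ?_, by rw [hsum, hSsum]⟩
    rw [Multiset.le_iff_count]
    intro b
    rcases eq_or_ne b 0 with rfl | hb
    · simp [Multiset.count_eq_zero_of_notMem hmem]
    · rw [Multiset.count_erase_of_ne hb]
      exact Multiset.le_iff_count.mp hA b

lemma zmultiples_eq_top {G : Type*} [AddCommGroup G] [Fintype G]
    (hp : (Fintype.card G).Prime) {g : G} (hg : g ≠ 0) :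
    AddSubgroup.zmultiples g = ⊤ := by
  apply AddSubgroup.eq_top_of_card_eq
  have h1 : addOrderOf g ∣ Fintype.card G := addOrderOf_dvd_card
  have h2 : addOrderOf g ≠ 1 := by
    rw [Ne, AddMonoid.addOrderOf_eq_one_iff]; exact hg
  have h3 : addOrderOf g = Fintype.card G :=
    ((Nat.Prime.eq_one_or_self_of_dvd hp _ h1).resolve_left h2)
  rw [Nat.card_eq_fintype_card, Nat.card_eq_fintype_card, Fintype.card_zmultiples, h3]

section SSums
variable {G : Type*} [AddCommGroup G] [DecidableEq G]

/-- The finset of all sub-multiset sums. -/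
def ssums (S : Multiset G) : Finset G := (S.powerset.map Multiset.sum).toFinset

lemma mem_ssums {S : Multiset G} {x : G} : x ∈ ssums S ↔ ∃ A ≤ S, A.sum = x := by
  simp only [ssums, Multiset.mem_toFinset, Multiset.mem_map, Multiset.mem_powerset]

lemma zero_mem_ssums (S : Multiset G) : (0:G) ∈ ssums S :=
  mem_ssums.mpr ⟨0, Multiset.zero_le S, rfl⟩

lemma ssums_cons (g : G) (S : Multiset G) :
    ssums (g ::ₘ S) = ssums S ∪ (ssums S).image (g + ·) := by
  have hfun : (Multiset.sum ∘ Multiset.cons g) = ((g + ·) ∘ Multiset.sum) := by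
    funext A; simp [Multiset.sum_cons]
  rw [ssums, Multiset.powerset_cons, Multiset.map_add, Multiset.toFinset_add,
    Multiset.map_map, hfun, ← Multiset.map_map]
  congr 1
  exact Multiset.toFinset_map _ _

lemma card_ssums_cons [Fintype G] (hp : (Fintype.card G).Prime) {g : G} (hg : g ≠ 0)
    (S : Multiset G) :
    min (Fintype.card G) ((ssums S).card + 1) ≤ (ssums (g ::ₘ S)).card := by
  set X := ssums S with hX
  have hinj : Function.Injective (g + ·) := fun a b h => by simpa using h
  rw [ssums_cons]
  by_cases hsub : X.image (g + ·) ⊆ X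
  · -- translation-invariant: X = univ
    have him : X.image (g + ·) = X :=
      Finset.eq_of_subset_of_card_le hsub (le_of_eq (Finset.card_image_of_injective X hinj).symm)
    have hfwd : ∀ x ∈ X, g + x ∈ X := by
      intro x hx
      rw [← him]; exact Finset.mem_image_of_mem _ hx
    have hbwd : ∀ x ∈ X, x - g ∈ X := by
      intro x hx
      rw [← him] at hx
      obtain ⟨y, hy, rfl⟩ := Finset.mem_image.mp hx
      simpa using hy
    obtain ⟨x0, hx0⟩ : X.Nonempty := ⟨0, zero_mem_ssums S⟩
    have hsmul : ∀ k : ℤ, x0 + k • g ∈ X := by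
      intro k
      induction k using Int.induction_on with
      | zero => simpa using hx0
      | succ k ih =>
        have := hfwd _ ih
        have heq : x0 + (k + 1 : ℤ) • g = g + (x0 + (k : ℤ) • g) := by
          rw [add_smul, one_smul]; abel
        rwa [heq]
      | pred k ih =>
        have := hbwd _ ih
        have heq : x0 + (-(k:ℤ) - 1 : ℤ) • g = (x0 + (-(k:ℤ)) • g) - g := by
          rw [sub_smul, one_smul]; abel
        rwa [heq]
    have hXuniv : X = Finset.univ := by
      apply Finset.eq_univ_of_forall
      intro z
      have hz : z - x0 ∈ AddSubgroup.zmultiples g := by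
        rw [zmultiples_eq_top hp hg]; trivial
      obtain ⟨k, hk⟩ := AddSubgroup.mem_zmultiples_iff.mp hz
      have : z = x0 + k • g := by rw [hk]; abel
      rw [this]; exact hsmul k
    calc min (Fintype.card G) (X.card + 1) ≤ Fintype.card G := min_le_left _ _
      _ = X.card := by rw [hXuniv, Finset.card_univ]
      _ ≤ (X ∪ X.image (g + ·)).card := Finset.card_le_card Finset.subset_union_left
  · obtain ⟨y, hy1, hy2⟩ := Finset.not_subset.mp hsub
    have hins : insert y X ⊆ X ∪ X.image (g + ·) := by
      intro z hz
      rcases Finset.mem_insert.mp hz with rfl | hz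
      · exact Finset.mem_union_right _ hy1
      · exact Finset.mem_union_left _ hz
    calc min (Fintype.card G) (X.card + 1) ≤ X.card + 1 := min_le_right _ _
      _ = (insert y X).card := (Finset.card_insert_of_notMem hy2).symm
      _ ≤ _ := Finset.card_le_card hins

lemma card_ssums_ge [Fintype G] (hp : (Fintype.card G).Prime) (S : Multiset G)
    (h0 : ∀ x ∈ S, x ≠ 0) :
    min (Fintype.card G) (Multiset.card S + 1) ≤ (ssums S).card := by
  induction S using Multiset.induction with
  | empty => simp [ssums]
  | cons g S ih =>
    have hg : g ≠ 0 := h0 g (Multiset.mem_cons_self g S)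
    have ih' := ih (fun x hx => h0 x (Multiset.mem_cons_of_mem hx))
    have h1 := card_ssums_cons hp hg S
    rw [Multiset.card_cons]
    omega

lemma ssums_eq_univ [Fintype G] (hp : (Fintype.card G).Prime) (S : Multiset G)
    (h0 : ∀ x ∈ S, x ≠ 0) (hlen : Fintype.card G - 1 ≤ Multiset.card S) :
    ssums S = Finset.univ := by
  have h1 := card_ssums_ge hp S h0
  have h2 : (ssums S).card ≤ Fintype.card G := by
    rw [← Finset.card_univ]; exact Finset.card_le_univ _
  have hpos := hp.pos
  have : (ssums S).card = Fintype.card G := by omega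
  exact Finset.eq_univ_of_card _ this

end SSums

section Main
variable {G : Type*} [AddCommGroup G] [Fintype G] [DecidableEq G]

lemma exists_half (hp : (Fintype.card G).Prime) (h3 : 3 ≤ Fintype.card G) (s : G) :
    ∃ t : G, t + t = s := by
  have hinj : Function.Injective (fun t : G => t + t) := by
    intro x y hxy
    simp only at hxy
    have h2 : (2 : ℕ) • (x - y) = 0 := by
      rw [two_nsmul]
      have : (x - y) + (x - y) = (x + x) - (y + y) := by abel
      rw [this, hxy, sub_self]
    have hd2 : addOrderOf (x - y) ∣ 2 := addOrderOf_dvd_of_nsmul_eq_zero h2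
    have hdp : addOrderOf (x - y) ∣ Fintype.card G := addOrderOf_dvd_card
    have : addOrderOf (x - y) = 1 := by
      rcases (Nat.dvd_prime Nat.prime_two).mp hd2 with h | h
      · exact h
      · exfalso
        rw [h] at hdp
        rcases Nat.Prime.eq_one_or_self_of_dvd hp 2 hdp with h' | h' <;> omega
    rw [AddMonoid.addOrderOf_eq_one_iff] at this
    exact sub_eq_zero.mp this
  have hsurj := (Finite.injective_iff_surjective.mp hinj) s
  exact hsurj

lemma wzs_of_long (hp : (Fintype.card G).Prime) (h3 : 3 ≤ Fintype.card G)
    (S : Multiset G) (h0 : ∀ x ∈ S, x ≠ 0)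
    (hlen : Fintype.card G - 1 ≤ Multiset.card S) : IsWZS (pmWeights G) S := by
  obtain ⟨t, ht⟩ := exists_half hp h3 S.sum
  have huniv := ssums_eq_univ hp S h0 hlen
  have : t ∈ ssums S := by rw [huniv]; exact Finset.mem_univ t
  obtain ⟨A, hA, hsum⟩ := mem_ssums.mp this
  exact (isWZS_iff S).mpr ⟨A, hA, by rw [hsum, ht]⟩

lemma atom_of_zero_mem {S : Multiset G} (hS : IsAtomPM S) (h0 : (0:G) ∈ S) :
    S = {0} := by
  have hsplit : ({0} : Multiset G) + S.erase 0 = S := by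
    rw [Multiset.singleton_add, Multiset.cons_erase h0]
  rcases hS.2.2 {0} (S.erase 0) wzs_singleton_zero (wzs_erase_zero S hS.2.1 h0) hsplit with h | h
  · exact absurd h (by simp)
  · rw [← hsplit, h, add_zero]

lemma atom_nonzero_mem {S : Multiset G} (hS : IsAtomPM S) (hne : S ≠ {0}) :
    ∀ x ∈ S, x ≠ 0 := by
  intro x hx hx0
  subst hx0
  exact hne (atom_of_zero_mem hS hx)

lemma atom_two_le_card {S : Multiset G} (hS : IsAtomPM S) (hne : S ≠ {0}) :
    2 ≤ Multiset.card S := by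
  rcases S.empty_or_exists_mem with rfl | ⟨a, ha⟩
  · exact absurd rfl hS.1
  by_contra hlt
  push_neg at hlt
  have hcard : Multiset.card S = 1 := by
    have h1 : 0 < Multiset.card S := Multiset.card_pos.mpr hS.1
    omega
  obtain ⟨b, rfl⟩ := Multiset.card_eq_one.mp hcard
  have hbmem : b ∈ ({b} : Multiset G) := Multiset.mem_singleton_self b
  have hb : b ≠ 0 := atom_nonzero_mem hS hne b hbmem
  obtain ⟨A, hA, hsum⟩ := (isWZS_iff _).mp hS.2.1
  rw [Multiset.sum_singleton] at hsum
  rcases Multiset.le_singleton.mp hA with rfl | rfl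
  · rw [Multiset.sum_zero, add_zero] at hsum
    exact hb hsum.symm
  · rw [Multiset.sum_singleton] at hsum
    exact hb (add_eq_right.mp hsum)

lemma atom_card_le (hp : (Fintype.card G).Prime) (h3 : 3 ≤ Fintype.card G)
    {S : Multiset G} (hS : IsAtomPM S) : Multiset.card S ≤ Fintype.card G := by
  by_contra hgt
  push_neg at hgt
  have hne : S ≠ {0} := by
    intro h; rw [h] at hgt; simp only [Multiset.card_singleton] at hgt; omega
  have h0 : ∀ x ∈ S, x ≠ 0 := atom_nonzero_mem hS hne
  -- S has more elements than card G, so some element repeats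
  have hdup : ∃ a : G, 2 ≤ Multiset.count a S := by
    by_contra hnd
    push_neg at hnd
    have hnodup : S.Nodup := Multiset.nodup_iff_count_le_one.mpr (fun a => by
      have := hnd a; omega)
    have h1 : S.toFinset.card = Multiset.card S := Multiset.toFinset_card_eq_card_iff_nodup.mpr hnodup
    have h2 : S.toFinset.card ≤ Fintype.card G := Finset.card_le_univ _
    omega
  obtain ⟨a, ha⟩ := hdup
  have hpair : ({a, a} : Multiset G) ≤ S := by
    rw [Multiset.le_iff_count]
    intro b
    rcases eq_or_ne b a with rfl | hb
    · simpa using ha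
    · simp [Multiset.count_cons, Multiset.count_singleton, if_neg hb, hb]
  have hwzsA : IsWZS (pmWeights G) ({a, a} : Multiset G) := by
    refine (isWZS_iff _).mpr ⟨{a}, ?_, ?_⟩
    · rw [Multiset.insert_eq_cons]
      exact Multiset.le_cons_self {a} a
    · simp [Multiset.insert_eq_cons]
  have hrest : IsWZS (pmWeights G) (S - {a, a}) := by
    apply wzs_of_long hp h3
    · intro x hx
      exact h0 x (Multiset.mem_of_le tsub_le_self hx)
    · have : Multiset.card (S - {a, a}) = Multiset.card S - 2 := by
        rw [Multiset.card_sub hpair]; rfl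
      omega
  rcases hS.2.2 _ _ hwzsA hrest (by rw [add_comm]; exact tsub_add_cancel_of_le hpair) with h | h
  · rw [Multiset.insert_eq_cons] at h
    exact Multiset.cons_ne_zero h
  · have hS2 : S = {a, a} := by
      rw [← tsub_add_cancel_of_le hpair, h, zero_add]
    rw [hS2] at hgt
    rw [Multiset.insert_eq_cons] at hgt
    simp at hgt
    omega

lemma mem_list_sum {α : Type*} {g : α} : ∀ {l : List (Multiset α)}, g ∈ l.sum → ∃ V ∈ l, g ∈ V := by
  intro l
  induction l with
  | nil => intro h; simp at h
  | cons V t ih =>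
    intro h
    rw [List.sum_cons, Multiset.mem_add] at h
    rcases h with h | h
    · exact ⟨V, List.mem_cons_self, h⟩
    · obtain ⟨W, hW, hg⟩ := ih h
      exact ⟨W, List.mem_cons_of_mem V hW, hg⟩

lemma card_list_sum_ge {α : Type*} : ∀ (l : List (Multiset α)),
    (∀ V ∈ l, 2 ≤ Multiset.card V) → 2 * l.length ≤ Multiset.card l.sum := by
  intro l
  induction l with
  | nil => intro _; simp
  | cons V t ih =>
    intro h
    rw [List.sum_cons, Multiset.card_add, List.length_cons]
    have h1 := h V (List.mem_cons_self)
    have h2 := ih (fun W hW => h W (List.mem_cons_of_mem V hW))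
    omega

lemma exists_erase_le {α : Type*} [DecidableEq α] : ∀ (l : List (Multiset α)) (U : Multiset α),
    U ≤ l.sum → Multiset.card U < l.length → ∃ W ∈ l, U ≤ (l.erase W).sum := by
  intro l
  induction l with
  | nil => intro U _ h; simp at h
  | cons V t ih =>
    intro U hle hlt
    rw [List.sum_cons] at hle
    have hU2 : U - V ≤ t.sum := tsub_le_iff_left.mpr hle
    by_cases h1 : U ∩ V = 0
    · refine ⟨V, List.mem_cons_self, ?_⟩
      rw [List.erase_cons_head]
      have heq : U - V = U := by
        ext b
        have h1b : Multiset.count b (U ∩ V) = 0 := by rw [h1]; simp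
        rw [Multiset.count_inter] at h1b
        rw [Multiset.count_sub]
        omega
      rwa [heq] at hU2
    · have hsplit : U ∩ V + (U - V) = U := by
        rw [Multiset.le_iff_count] at *
        ext b
        simp [Multiset.count_add, Multiset.count_inter, Multiset.count_sub]
        omega
      have hc1 : 1 ≤ Multiset.card (U ∩ V) := Multiset.card_pos.mpr h1
      have hcsplit := congrArg Multiset.card hsplit
      rw [Multiset.card_add] at hcsplit
      rw [List.length_cons] at hlt
      have hlt2 : Multiset.card (U - V) < t.length := by omega
      obtain ⟨W, hWt, hWle⟩ := ih (U - V) hU2 hlt2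
      refine ⟨W, List.mem_cons_of_mem V hWt, ?_⟩
      have herase : ((V :: t).erase W).sum = V + (t.erase W).sum := by
        by_cases hVW : V = W
        · subst hVW
          rw [List.erase_cons_head]
          exact (List.sum_erase hWt).symm
        · rw [List.erase_cons_tail (by simpa using (Ne.symm hVW ∘ Eq.symm))]
          · rw [List.sum_cons]
      rw [herase, ← hsplit]
      exact add_le_add (Multiset.inter_le_right) hWle

lemma main_aux (hp : (Fintype.card G).Prime) (h3 : 3 ≤ Fintype.card G)
    (U : Multiset G) (hU : IsAtomPM U) (hU0 : (0:G) ∉ U) :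
    ∀ n (l : List (Multiset G)), l.length ≤ n → (∀ A ∈ l, IsAtomPM A) →
    ∀ C : Multiset G, IsWZS (pmWeights G) C → U + C = l.sum →
    ∃ l' : List (Multiset G), l'.Subperm l ∧ l'.length ≤ Fintype.card G ∧
      ∃ C' : Multiset G, IsWZS (pmWeights G) C' ∧ U + C' = l'.sum := by
  intro n
  induction n with
  | zero =>
    intro l hlen hl C hC hsum
    exact ⟨l, List.Subperm.refl l, by omega, C, hC, hsum⟩
  | succ m ih =>
    intro l hlen hl C hC hsum
    by_cases hsmall : l.length ≤ Fintype.card G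
    · exact ⟨l, List.Subperm.refl l, hsmall, C, hC, hsum⟩
    push_neg at hsmall
    by_cases hzl : ∃ V ∈ l, V = ({0} : Multiset G)
    · -- remove a {0} factor
      obtain ⟨V, hVl, rfl⟩ := hzl
      have hvsum : ({0} : Multiset G) + (l.erase ({0} : Multiset G)).sum = l.sum :=
        List.sum_erase hVl
      have h0C : (0:G) ∈ C := by
        have h0s : (0:G) ∈ U + C := by
          rw [hsum, ← hvsum]
          exact Multiset.mem_add.mpr (Or.inl (Multiset.mem_singleton_self 0))
        rcases Multiset.mem_add.mp h0s with h | h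
        · exact absurd h hU0
        · exact h
      have hC2 : IsWZS (pmWeights G) (C.erase 0) := wzs_erase_zero C hC h0C
      have hsum2 : U + C.erase 0 = (l.erase ({0} : Multiset G)).sum := by
        have hC0 : C = (0 : G) ::ₘ C.erase 0 := (Multiset.cons_erase h0C).symm
        have key : ({0} : Multiset G) + (U + C.erase 0) = {0} + (l.erase ({0} : Multiset G)).sum := by
          rw [add_left_comm, Multiset.singleton_add, ← hC0, hsum, ← hvsum]
        exact add_left_cancel key
      have hlen2 : (l.erase ({0} : Multiset G)).length ≤ m := by
        rw [List.length_erase_of_mem hVl]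
        omega
      have hl2 : ∀ A ∈ l.erase ({0} : Multiset G), IsAtomPM A :=
        fun A hA => hl A (List.mem_of_mem_erase hA)
      obtain ⟨l', hsub, hlen', C', hC', hsum'⟩ := ih _ hlen2 hl2 _ hC2 hsum2
      exact ⟨l', hsub.trans List.erase_sublist.subperm, hlen', C', hC', hsum'⟩
    · -- no {0} factor
      push_neg at hzl
      have hnz : ∀ V ∈ l, ∀ x ∈ V, x ≠ 0 :=
        fun V hV => atom_nonzero_mem (hl V hV) (hzl V hV)
      have h2le : ∀ V ∈ l, 2 ≤ Multiset.card V :=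
        fun V hV => atom_two_le_card (hl V hV) (hzl V hV)
      have hUle : U ≤ l.sum := Multiset.le_iff_exists_add.mpr ⟨C, hsum.symm⟩
      have hcardU : Multiset.card U ≤ Fintype.card G := atom_card_le hp h3 hU
      obtain ⟨W, hWl, hWle⟩ := exists_erase_le l U hUle (by omega)
      set D := (l.erase W).sum - U with hD
      have hDsum : U + D = (l.erase W).sum := by
        rw [add_comm]; exact tsub_add_cancel_of_le hWle
      have hDnz : ∀ x ∈ D, x ≠ 0 := by
        intro x hx
        have hx2 : x ∈ (l.erase W).sum := Multiset.mem_of_le tsub_le_self hx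
        obtain ⟨V, hVe, hxV⟩ := mem_list_sum hx2
        exact hnz V (List.mem_of_mem_erase hVe) x hxV
      have hcardsum : 2 * (l.erase W).length ≤ Multiset.card (l.erase W).sum :=
        card_list_sum_ge _ (fun V hV => h2le V (List.mem_of_mem_erase hV))
      have hlenerase : (l.erase W).length = l.length - 1 := List.length_erase_of_mem hWl
      have hcardD : Multiset.card D = Multiset.card (l.erase W).sum - Multiset.card U :=
        Multiset.card_sub hWle
      have hDwzs : IsWZS (pmWeights G) D := by
        apply wzs_of_long hp h3 D hDnz
        omega
      have hlen2 : (l.erase W).length ≤ m := by omega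
      have hl2 : ∀ A ∈ l.erase W, IsAtomPM A :=
        fun A hA => hl A (List.mem_of_mem_erase hA)
      obtain ⟨l', hsub, hlen', C', hC', hsum'⟩ := ih _ hlen2 hl2 _ hDwzs hDsum
      exact ⟨l', hsub.trans List.erase_sublist.subperm, hlen', C', hC', hsum'⟩

end Main

theorem stmt18 {G : Type*} [AddCommGroup G] [Fintype G]
    (hp : (Fintype.card G).Prime) (h3 : 3 ≤ Fintype.card G)
    (U : Multiset G) (hU : IsAtomPM U)
    (l : List (Multiset G)) (hl : ∀ A ∈ l, IsAtomPM A)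
    (hdvd : ∃ C : Multiset G, IsWZS (pmWeights G) C ∧ U + C = l.sum) :
    ∃ l' : List (Multiset G), l'.Subperm l ∧ l'.length ≤ Fintype.card G ∧
      ∃ C : Multiset G, IsWZS (pmWeights G) C ∧ U + C = l'.sum := by
  classical
  obtain ⟨C, hC, hsum⟩ := hdvd
  by_cases h0U : (0:G) ∈ U
  · have hU0 : U = {0} := atom_of_zero_mem hU h0U
    have h0s : (0:G) ∈ l.sum := by
      rw [← hsum]
      exact Multiset.mem_add.mpr (Or.inl (hU0 ▸ Multiset.mem_singleton_self 0))
    obtain ⟨V, hVl, hV0⟩ := mem_list_sum h0s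
    have hVeq : V = {0} := atom_of_zero_mem (hl V hVl) hV0
    refine ⟨[V], List.singleton_subperm_iff.mpr hVl,
      by rw [List.length_cons, List.length_nil]; omega, 0, wzs_zero, ?_⟩
    rw [List.sum_cons, List.sum_nil, add_zero, add_zero, hVeq, hU0]
  · exact main_aux hp h3 U hU h0U l.length l le_rfl hl C hC hsum
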